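/- arXiv:2506.21878 — 4 statements merged into one kernel-verified Lean document; each statement's English description precedes it below -/
import Mathlib

section
/- Let 0 ≤ s < η < e ≤ T be integers and let p(s+1),…,p(e) be a sequence in a real inner product space with p(t) = P₁ for s < t ≤ η and p(t) = P₂ for η < t ≤ e, and set κ = ‖P₂ − P₁‖. Then the CUSUM statistic satisfies ‖p̃^{s,e}(t)‖² = ((t − s)/((e − s)(e − t)))·(e − η)²·κ² for all s < t ≤ η, and ‖p̃^{s,e}(t)‖² = ((e − t)/((e − s)(t − s)))·(η − s)²·κ² for all η < t < e. -/
open scoped BigOperators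

/-- CUSUM weights `ω_{s,e}^t(u)`. -/
noncomputable def cusumW (s e t u : ℕ) : ℝ :=
  if u ≤ t then Real.sqrt (((e : ℝ) - t) / (((e : ℝ) - s) * ((t : ℝ) - s)))
  else - Real.sqrt (((t : ℝ) - s) / (((e : ℝ) - s) * ((e : ℝ) - t)))

/-- CUSUM statistic `B̃^{s,e}(t)` of a sequence in a real vector space. -/
noncomputable def cusum {V : Type*} [AddCommGroup V] [Module ℝ V]
    (B : ℕ → V) (s e t : ℕ) : V :=
  ∑ u ∈ Finset.Ioc s e, cusumW s e t u • B u

private lemma sum_Ioc_const_smul {V : Type*} [AddCommGroup V] [Module ℝ V]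
    (a b : ℕ) (hab : a ≤ b) (c : ℝ) (v : V) :
    ∑ _u ∈ Finset.Ioc a b, c • v = (((b : ℝ) - a) * c) • v := by
  rw [Finset.sum_const, Nat.card_Ioc, ← Nat.cast_smul_eq_nsmul ℝ, Nat.cast_sub hab,
    mul_smul]

private lemma key_sqrt (s t e : ℝ) (hts : 0 < t - s) (het : 0 < e - t) (hes : 0 < e - s) :
    (t - s) * Real.sqrt ((e - t) / ((e - s) * (t - s)))
      = (e - t) * Real.sqrt ((t - s) / ((e - s) * (e - t))) := by
  rw [show (t - s) = Real.sqrt ((t - s) ^ 2) by rw [Real.sqrt_sq hts.le],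
      show (e - t) = Real.sqrt ((e - t) ^ 2) by rw [Real.sqrt_sq het.le],
      ← Real.sqrt_mul (by positivity), ← Real.sqrt_mul (by positivity)]
  congr 1
  simp only [Real.sqrt_sq hts.le, Real.sqrt_sq het.le]
  have h1 : t - s ≠ 0 := hts.ne'
  have h2 : e - t ≠ 0 := het.ne'
  have h3 : e - s ≠ 0 := hes.ne'
  field_simp

/-- **Lemma (population CUSUM norm for one change point).**  For a sequence in a
real inner product space which equals `P₁` on `(s, η]` and `P₂` on `(η, e]`,
with `κ = ‖P₂ − P₁‖`, the CUSUM statistic satisfies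
`‖p̃^{s,e}(t)‖² = ((t−s)/((e−s)(e−t)))(e−η)²κ²` for `s < t ≤ η` and
`‖p̃^{s,e}(t)‖² = ((e−t)/((e−s)(t−s)))(η−s)²κ²` for `η < t < e`. -/
theorem cusum_norm_single_change_point
    {E : Type*} [NormedAddCommGroup E] [InnerProductSpace ℝ E]
    (T s η e : ℕ) (hsη : s < η) (hηe : η < e) (heT : e ≤ T)
    (p : ℕ → E) (P₁ P₂ : E)
    (h1 : ∀ t, s < t → t ≤ η → p t = P₁)
    (h2 : ∀ t, η < t → t ≤ e → p t = P₂)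
    (κ : ℝ) (hκ : κ = ‖P₂ - P₁‖) :
    (∀ t, s < t → t ≤ η →
      ‖cusum p s e t‖ ^ 2 =
        ((t : ℝ) - s) / (((e : ℝ) - s) * ((e : ℝ) - t)) * ((e : ℝ) - η) ^ 2 * κ ^ 2) ∧
    (∀ t, η < t → t < e →
      ‖cusum p s e t‖ ^ 2 =
        ((e : ℝ) - t) / (((e : ℝ) - s) * ((t : ℝ) - s)) * ((η : ℝ) - s) ^ 2 * κ ^ 2) := by
  have hκ' : ‖P₁ - P₂‖ = κ := by rw [hκ, norm_sub_rev]
  constructor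
  · intro t hst htη
    have hte : t < e := lt_of_le_of_lt htη hηe
    have hts : (0:ℝ) < (t:ℝ) - s := by
      have : (s:ℝ) < t := by exact_mod_cast hst
      linarith
    have het : (0:ℝ) < (e:ℝ) - t := by
      have : (t:ℝ) < e := by exact_mod_cast hte
      linarith
    have hes : (0:ℝ) < (e:ℝ) - s := by linarith
    have heη : (0:ℝ) ≤ (e:ℝ) - η := by
      have : (η:ℝ) ≤ e := by exact_mod_cast hηe.le
      linarith
    set a := Real.sqrt (((e:ℝ) - t) / (((e:ℝ) - s) * ((t:ℝ) - s))) with ha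
    set b := Real.sqrt (((t:ℝ) - s) / (((e:ℝ) - s) * ((e:ℝ) - t))) with hb
    have hsplit : cusum p s e t
        = (((t:ℝ) - s) * a) • P₁ + ((((η:ℝ) - t) * b) • (-P₁) + (((e:ℝ) - η) * b) • (-P₂)) := by
      unfold cusum
      rw [← Finset.sum_Ioc_consecutive _ hst.le hte.le,
          ← Finset.sum_Ioc_consecutive _ htη hηe.le]
      congr 1
      · rw [Finset.sum_congr rfl (fun u hu => ?_), sum_Ioc_const_smul _ _ hst.le]
        rw [Finset.mem_Ioc] at hu
        rw [cusumW, if_pos hu.2, h1 u hu.1 (hu.2.trans htη)]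
      · congr 1
        · rw [Finset.sum_congr rfl (fun u hu => ?_), sum_Ioc_const_smul _ _ htη]
          rw [Finset.mem_Ioc] at hu
          rw [cusumW, if_neg (by omega), h1 u (hst.trans hu.1) hu.2, neg_smul, ← smul_neg]
        · rw [Finset.sum_congr rfl (fun u hu => ?_), sum_Ioc_const_smul _ _ hηe.le]
          rw [Finset.mem_Ioc] at hu
          rw [cusumW, if_neg (by omega), h2 u hu.1 hu.2, neg_smul, ← smul_neg]
    have hkey : ((t:ℝ) - s) * a = ((e:ℝ) - t) * b := key_sqrt _ _ _ hts het hes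
    have hform : cusum p s e t = (((e:ℝ) - η) * b) • (P₁ - P₂) := by
      rw [hsplit]
      match_scalars
      · linear_combination hkey
      · ring
    rw [hform, norm_smul, Real.norm_eq_abs, abs_of_nonneg (by positivity), hκ', mul_pow,
      mul_pow, hb, Real.sq_sqrt (by positivity)]
    ring
  · intro t hηt hte
    have hst : s < t := hsη.trans hηt
    have hts : (0:ℝ) < (t:ℝ) - s := by
      have : (s:ℝ) < t := by exact_mod_cast hst
      linarith
    have het : (0:ℝ) < (e:ℝ) - t := by
      have : (t:ℝ) < e := by exact_mod_cast hte
      linarith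
    have hes : (0:ℝ) < (e:ℝ) - s := by linarith
    have hηs : (0:ℝ) ≤ (η:ℝ) - s := by
      have : (s:ℝ) ≤ η := by exact_mod_cast hsη.le
      linarith
    set a := Real.sqrt (((e:ℝ) - t) / (((e:ℝ) - s) * ((t:ℝ) - s))) with ha
    set b := Real.sqrt (((t:ℝ) - s) / (((e:ℝ) - s) * ((e:ℝ) - t))) with hb
    have hsplit : cusum p s e t
        = ((((η:ℝ) - s) * a) • P₁ + (((t:ℝ) - η) * a) • P₂) + (((e:ℝ) - t) * b) • (-P₂) := by
      unfold cusum
      rw [← Finset.sum_Ioc_consecutive _ hst.le hte.le,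
          ← Finset.sum_Ioc_consecutive _ hsη.le hηt.le]
      congr 1
      · congr 1
        · rw [Finset.sum_congr rfl (fun u hu => ?_), sum_Ioc_const_smul _ _ hsη.le]
          rw [Finset.mem_Ioc] at hu
          rw [cusumW, if_pos (hu.2.trans hηt.le), h1 u hu.1 hu.2]
        · rw [Finset.sum_congr rfl (fun u hu => ?_), sum_Ioc_const_smul _ _ hηt.le]
          rw [Finset.mem_Ioc] at hu
          rw [cusumW, if_pos hu.2, h2 u hu.1 (hu.2.trans hte.le)]
      · rw [Finset.sum_congr rfl (fun u hu => ?_), sum_Ioc_const_smul _ _ hte.le]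
        rw [Finset.mem_Ioc] at hu
        rw [cusumW, if_neg (by omega), h2 u (hηt.trans hu.1) hu.2, neg_smul, ← smul_neg]
    have hkey : ((t:ℝ) - s) * a = ((e:ℝ) - t) * b := key_sqrt _ _ _ hts het hes
    have hform : cusum p s e t = (((η:ℝ) - s) * a) • (P₁ - P₂) := by
      rw [hsplit]
      match_scalars
      · ring
      · linear_combination hkey
    rw [hform, norm_smul, Real.norm_eq_abs, abs_of_nonneg (by positivity), hκ', mul_pow,
      mul_pow, ha, Real.sq_sqrt (by positivity)]
    ring
end

section
/- Let Δ > 0, let 0 ≤ s < η < e ≤ T be integers, and let p(s+1),…,p(e) be a sequence in a real inner product space with p(t) = P₁ for s < t ≤ η and p(t) = P₂ for η < t ≤ e, and set κ = ‖P₂ − P₁‖. Let b be an integer with s < b < e satisfying |b − η| ≤ Δ/6 and min{b − s, e − b} ≥ Δ/3. Then the CUSUM statistic satisfies ‖p̃^{s,e}(b)‖² ≥ Δκ²/24. -/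
open scoped BigOperators

lemma aux_sqrt_mul (x y n : ℝ) (hx : 0 < x) (hn : 0 < n) :
    x * Real.sqrt (y / (n * x)) = Real.sqrt (x * y / n) := by
  have h := Real.sqrt_mul (sq_nonneg x) (y / (n * x))
  rw [Real.sqrt_sq hx.le] at h
  rw [← h]
  congr 1
  field_simp


lemma aux_bound (Δ x y m : ℝ) (hΔ : 0 < Δ) (hx : 0 < x) (hy : 0 < y)
    (hx3 : Δ / 3 ≤ x) (hy3 : Δ / 3 ≤ y) (hm : y / 2 ≤ m) :
    Δ / 24 ≤ m ^ 2 * (x / ((x + y) * y)) := by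
  have hden : (0:ℝ) < (x + y) * y := by positivity
  have hmsq : (y/2)^2 ≤ m^2 := by nlinarith
  have h6 : Δ * (x + y) ≤ 6 * (x * y) := by nlinarith
  have hineq2 : Δ / 24 * ((x + y) * y) ≤ m^2 * x := by
    nlinarith [mul_le_mul_of_nonneg_right h6 hy.le, mul_le_mul_of_nonneg_right hmsq hx.le]
  calc Δ / 24 ≤ m^2 * x / ((x + y) * y) := by rw [le_div_iff₀ hden]; linarith
    _ = m^2 * (x / ((x + y) * y)) := by ring


/-- **Lemma (CUSUM signal strength near the change point).**  For a sequence in a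
real inner product space equal to `P₁` on `(s, η]` and `P₂` on `(η, e]`, with
`κ = ‖P₂ − P₁‖`, any point `b` with `|b − η| ≤ Δ/6` and
`min{b − s, e − b} ≥ Δ/3` satisfies `‖p̃^{s,e}(b)‖² ≥ Δκ²/24`. -/
theorem cusum_signal_lower_bound
    {E : Type*} [NormedAddCommGroup E] [InnerProductSpace ℝ E]
    (Δ : ℝ) (hΔ : 0 < Δ)
    (T s η e : ℕ) (hsη : s < η) (hηe : η < e) (heT : e ≤ T)
    (p : ℕ → E) (P₁ P₂ : E)
    (h1 : ∀ t, s < t → t ≤ η → p t = P₁)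
    (h2 : ∀ t, η < t → t ≤ e → p t = P₂)
    (κ : ℝ) (hκ : κ = ‖P₂ - P₁‖)
    (b : ℕ) (hsb : s < b) (hbe : b < e)
    (hclose : |(b : ℝ) - (η : ℝ)| ≤ Δ / 6)
    (hsep : Δ / 3 ≤ min ((b : ℝ) - (s : ℝ)) ((e : ℝ) - (b : ℝ))) :
    Δ * κ ^ 2 / 24 ≤ ‖cusum p s e b‖ ^ 2 := by
  have hse : s < e := hsη.trans hηe
  have hx : (0:ℝ) < (b:ℝ) - s := by
    have := (Nat.cast_lt (α := ℝ)).2 hsb; linarith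
  have hy : (0:ℝ) < (e:ℝ) - b := by
    have := (Nat.cast_lt (α := ℝ)).2 hbe; linarith
  have hn : (0:ℝ) < (e:ℝ) - s := by linarith
  have hx3 : Δ / 3 ≤ (b:ℝ) - s := le_trans hsep (min_le_left _ _)
  have hy3 : Δ / 3 ≤ (e:ℝ) - b := le_trans hsep (min_le_right _ _)
  have habs := abs_le.mp hclose
  have hnsum : (e:ℝ) - s = ((b:ℝ) - s) + ((e:ℝ) - b) := by ring
  set A := Real.sqrt (((e:ℝ) - b) / (((e:ℝ) - s) * ((b:ℝ) - s))) with hA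
  set Bv := Real.sqrt (((b:ℝ) - s) / (((e:ℝ) - s) * ((e:ℝ) - b))) with hBv
  -- weight value lemmas
  have wval : ∀ u : ℕ, cusumW s e b u = if u ≤ b then A else -Bv := by
    intro u
    rw [cusumW, hA, hBv]
  -- constant sum lemmas
  have sumA : ∀ l r : ℕ, l ≤ r → r ≤ b →
      ∑ u ∈ Finset.Ioc l r, cusumW s e b u = ((r:ℝ) - l) * A := by
    intro l r hlr hrb
    have h : ∀ u ∈ Finset.Ioc l r, cusumW s e b u = A := by
      intro u hu
      rw [Finset.mem_Ioc] at hu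
      rw [wval, if_pos (hu.2.trans hrb)]
    rw [Finset.sum_congr rfl h, Finset.sum_const, Nat.card_Ioc, nsmul_eq_mul,
      Nat.cast_sub hlr]
  have sumB : ∀ l r : ℕ, l ≤ r → b ≤ l →
      ∑ u ∈ Finset.Ioc l r, cusumW s e b u = ((r:ℝ) - l) * (-Bv) := by
    intro l r hlr hbl
    have h : ∀ u ∈ Finset.Ioc l r, cusumW s e b u = -Bv := by
      intro u hu
      rw [Finset.mem_Ioc] at hu
      rw [wval, if_neg (by omega)]
    rw [Finset.sum_congr rfl h, Finset.sum_const, Nat.card_Ioc, nsmul_eq_mul,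
      Nat.cast_sub hlr]
  -- the key sqrt identity
  have key : ((b:ℝ) - s) * A = ((e:ℝ) - b) * Bv := by
    rw [hA, hBv, aux_sqrt_mul _ _ _ hx hn, aux_sqrt_mul _ _ _ hy hn]
    congr 1
    ring
  -- total weight is zero
  have total : ∑ u ∈ Finset.Ioc s e, cusumW s e b u = 0 := by
    rw [← Finset.sum_Ioc_consecutive _ hsb.le hbe.le, sumA s b hsb.le le_rfl,
      sumB b e hbe.le le_rfl]
    rw [key]; ring
  -- split cusum at η
  set S₁ := ∑ u ∈ Finset.Ioc s η, cusumW s e b u with hS₁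
  have hsplit : cusum p s e b = S₁ • (P₁ - P₂) := by
    have hdec : cusum p s e b
        = (∑ u ∈ Finset.Ioc s η, cusumW s e b u • p u)
          + ∑ u ∈ Finset.Ioc η e, cusumW s e b u • p u := by
      rw [cusum, ← Finset.sum_Ioc_consecutive _ hsη.le hηe.le]
    have e1 : ∑ u ∈ Finset.Ioc s η, cusumW s e b u • p u = S₁ • P₁ := by
      rw [hS₁, Finset.sum_smul]
      refine Finset.sum_congr rfl fun u hu => ?_
      rw [Finset.mem_Ioc] at hu
      rw [h1 u hu.1 hu.2]
    have e2 : ∑ u ∈ Finset.Ioc η e, cusumW s e b u • p u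
        = (∑ u ∈ Finset.Ioc η e, cusumW s e b u) • P₂ := by
      rw [Finset.sum_smul]
      refine Finset.sum_congr rfl fun u hu => ?_
      rw [Finset.mem_Ioc] at hu
      rw [h2 u hu.1 hu.2]
    have e3 : ∑ u ∈ Finset.Ioc η e, cusumW s e b u = -S₁ := by
      have := Finset.sum_Ioc_consecutive (cusumW s e b) hsη.le hηe.le
      rw [total] at this
      rw [hS₁]; linarith
    rw [hdec, e1, e2, e3, smul_sub, neg_smul]
    abel
  have hnorm : ‖cusum p s e b‖ ^ 2 = S₁ ^ 2 * κ ^ 2 := by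
    rw [hsplit, norm_smul, mul_pow, hκ, norm_sub_rev, Real.norm_eq_abs, sq_abs]
  rw [hnorm]
  -- it suffices to show Δ/24 ≤ S₁^2
  have hκ2 : (0:ℝ) ≤ κ ^ 2 := sq_nonneg κ
  have main : Δ / 24 ≤ S₁ ^ 2 := by
    rcases le_or_gt b η with hbη | hηb
    · -- b ≤ η : S₁ = (e - η) * Bv
      have hbηr : (b:ℝ) ≤ η := by exact_mod_cast hbη
      have hηer : (η:ℝ) ≤ e := by exact_mod_cast hηe.le
      have hS : S₁ = ((e:ℝ) - η) * Bv := by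
        rw [hS₁, ← Finset.sum_Ioc_consecutive _ hsb.le hbη, sumA s b hsb.le le_rfl,
          sumB b η hbη le_rfl, key]
        ring
      have hBsq : Bv ^ 2 = ((b:ℝ) - s) / (((e:ℝ) - s) * ((e:ℝ) - b)) := by
        rw [hBv, Real.sq_sqrt (by positivity)]
      rw [hS, mul_pow, hBsq]
      rw [hnsum]
      have hm : ((e:ℝ) - b) / 2 ≤ (e:ℝ) - η := by
        have h' : (η:ℝ) - b ≤ Δ / 6 := by linarith [habs.1]
        linarith
      exact aux_bound Δ _ _ _ hΔ hx hy hx3 hy3 hm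
    · -- η < b : S₁ = (η - s) * A
      have hηbr : (η:ℝ) ≤ b := by exact_mod_cast hηb.le
      have hsηr : (s:ℝ) ≤ η := by exact_mod_cast hsη.le
      have hS : S₁ = ((η:ℝ) - s) * A := sumA s η hsη.le hηb.le
      have hAsq : A ^ 2 = ((e:ℝ) - b) / (((e:ℝ) - s) * ((b:ℝ) - s)) := by
        rw [hA, Real.sq_sqrt (by positivity)]
      rw [hS, mul_pow, hAsq]
      rw [hnsum]
      have hm : ((b:ℝ) - s) / 2 ≤ (η:ℝ) - s := by
        have h' : (b:ℝ) - η ≤ Δ / 6 := habs.2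
        linarith
      calc Δ / 24 ≤ ((η:ℝ) - s)^2 * (((e:ℝ) - b) / ((((e:ℝ) - b) + ((b:ℝ) - s)) * ((b:ℝ) - s))) :=
             aux_bound Δ _ _ _ hΔ hy hx hy3 hx3 hm
        _ = ((η:ℝ) - s)^2 * (((e:ℝ) - b) / ((((b:ℝ) - s) + ((e:ℝ) - b)) * ((b:ℝ) - s))) := by
             ring
  calc Δ * κ ^ 2 / 24 = (Δ / 24) * κ ^ 2 := by ring
    _ ≤ S₁ ^ 2 * κ ^ 2 := mul_le_mul_of_nonneg_right main hκ2
end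

section
/- Let 0 ≤ s < η < e ≤ T be integers and let p(s+1),…,p(e) be a sequence in a real inner product space with p(t) = P₁ for s < t ≤ η and p(t) = P₂ for η < t ≤ e, and set κ = ‖P₂ − P₁‖. Then ‖p̃^{s,e}(η)‖² = ((η − s)(e − η)/(e − s))·κ², and consequently κ²·min{η − s, e − η}/2 ≤ ‖p̃^{s,e}(η)‖² ≤ κ²·min{η − s, e − η}. -/
open scoped BigOperators

/-- **Lemma (CUSUM norm at the change point).**  For a sequence in a real inner
product space equal to `P₁` on `(s, η]` and `P₂` on `(η, e]`, with
`κ = ‖P₂ − P₁‖`, one has `‖p̃^{s,e}(η)‖² = ((η−s)(e−η)/(e−s))κ²`, whence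
`κ² min{η−s, e−η}/2 ≤ ‖p̃^{s,e}(η)‖² ≤ κ² min{η−s, e−η}`. -/
theorem cusum_norm_at_change_point
    {E : Type*} [NormedAddCommGroup E] [InnerProductSpace ℝ E]
    (T s η e : ℕ) (hsη : s < η) (hηe : η < e) (heT : e ≤ T)
    (p : ℕ → E) (P₁ P₂ : E)
    (h1 : ∀ t, s < t → t ≤ η → p t = P₁)
    (h2 : ∀ t, η < t → t ≤ e → p t = P₂)
    (κ : ℝ) (hκ : κ = ‖P₂ - P₁‖) :
    ‖cusum p s e η‖ ^ 2 =
      ((η : ℝ) - s) * ((e : ℝ) - η) / ((e : ℝ) - s) * κ ^ 2 ∧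
    κ ^ 2 * min ((η : ℝ) - s) ((e : ℝ) - η) / 2 ≤ ‖cusum p s e η‖ ^ 2 ∧
    ‖cusum p s e η‖ ^ 2 ≤ κ ^ 2 * min ((η : ℝ) - s) ((e : ℝ) - η) := by
  have hsη' : (s : ℝ) < η := by exact_mod_cast hsη
  have hηe' : (η : ℝ) < e := by exact_mod_cast hηe
  set a : ℝ := (η : ℝ) - s with ha
  set b : ℝ := (e : ℝ) - η with hb
  have hA : (0 : ℝ) < a := by simp [ha]; linarith
  have hB : (0 : ℝ) < b := by simp [hb]; linarith
  have hN : (0 : ℝ) < a + b := by linarith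
  have hes : (e : ℝ) - s = a + b := by simp [ha, hb]
  have hq : (0 : ℝ) ≤ a * b / (a + b) := by positivity
  have key : cusum p s e η = Real.sqrt (a * b / (a + b)) • (P₁ - P₂) := by
    unfold cusum
    rw [← Finset.sum_Ioc_consecutive _ hsη.le hηe.le]
    have e1 : ∀ u ∈ Finset.Ioc s η, cusumW s e η u • p u
        = Real.sqrt (b / ((a + b) * a)) • P₁ := by
      intro u hu
      simp only [Finset.mem_Ioc] at hu
      rw [h1 u hu.1 hu.2, cusumW, if_pos hu.2, hes]
    have e2 : ∀ u ∈ Finset.Ioc η e, cusumW s e η u • p u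
        = (- Real.sqrt (a / ((a + b) * b))) • P₂ := by
      intro u hu
      simp only [Finset.mem_Ioc] at hu
      rw [h2 u hu.1 hu.2, cusumW, if_neg (by omega), hes]
    rw [Finset.sum_congr rfl e1, Finset.sum_congr rfl e2, Finset.sum_const,
      Finset.sum_const, Nat.card_Ioc, Nat.card_Ioc]
    have c1 : ((η - s : ℕ) : ℝ) = a := by
      rw [Nat.cast_sub hsη.le]
    have c2 : ((e - η : ℕ) : ℝ) = b := by
      rw [Nat.cast_sub hηe.le]
    rw [← Nat.cast_smul_eq_nsmul ℝ, ← Nat.cast_smul_eq_nsmul ℝ, c1, c2,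
      smul_smul, smul_smul]
    have s1 : a * Real.sqrt (b / ((a + b) * a)) = Real.sqrt (a * b / (a + b)) := by
      rw [show a = Real.sqrt (a ^ 2) from (Real.sqrt_sq hA.le).symm,
        ← Real.sqrt_mul (by positivity)]
      congr 1
      field_simp
      ring_nf
      rw [Real.sq_sqrt (by positivity)]
    have s2 : b * Real.sqrt (a / ((a + b) * b)) = Real.sqrt (a * b / (a + b)) := by
      rw [show b = Real.sqrt (b ^ 2) from (Real.sqrt_sq hB.le).symm,
        ← Real.sqrt_mul (by positivity)]
      congr 1
      field_simp
      ring_nf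
      rw [Real.sq_sqrt (by positivity)]
    rw [mul_neg, s1, s2, smul_sub, neg_smul, sub_eq_add_neg]
  have hnorm : ‖cusum p s e η‖ ^ 2 = a * b / (a + b) * κ ^ 2 := by
    rw [key, norm_smul, Real.norm_eq_abs, abs_of_nonneg (Real.sqrt_nonneg _),
      mul_pow, Real.sq_sqrt hq, norm_sub_rev, ← hκ]
  have hq1 : min a b / 2 ≤ a * b / (a + b) := by
    rw [div_le_div_iff₀ (by norm_num) hN]
    rcases le_total a b with hab | hab
    · rw [min_eq_left hab]; nlinarith
    · rw [min_eq_right hab]; nlinarith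
  have hq2 : a * b / (a + b) ≤ min a b := by
    rcases le_total a b with hab | hab
    · rw [min_eq_left hab, div_le_iff₀ hN]; nlinarith
    · rw [min_eq_right hab, div_le_iff₀ hN]; nlinarith
  have hκ2 : (0 : ℝ) ≤ κ ^ 2 := sq_nonneg κ
  refine ⟨by rw [hnorm, hes], ?_, ?_⟩
  · rw [hnorm]
    calc κ ^ 2 * min a b / 2 = min a b / 2 * κ ^ 2 := by ring
    _ ≤ a * b / (a + b) * κ ^ 2 := by nlinarith
  · rw [hnorm]
    calc a * b / (a + b) * κ ^ 2 ≤ min a b * κ ^ 2 := by nlinarith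
    _ = κ ^ 2 * min a b := by ring
end

section
/- Let 0 ≤ s < η < e ≤ T be integers and let p(s+1),…,p(e) be a sequence in a real inner product space with p(t) = P₁ for s < t ≤ η and p(t) = P₂ for η < t ≤ e. Then the map t ↦ ‖p̃^{s,e}(t)‖² is nondecreasing on integers t ∈ (s, η] and nonincreasing on integers t ∈ [η, e); in particular ‖p̃^{s,e}(t)‖ ≤ ‖p̃^{s,e}(η)‖ for all s < t < e, i.e. the population CUSUM norm is maximized at the true change point η. -/
open scoped BigOperators

private lemma key_id (n m N : ℝ) (hn : 0 < n) (hm : 0 < m) (hN : 0 < N) :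
    n * Real.sqrt (m / (N * n)) = m * Real.sqrt (n / (N * m)) := by
  have h1 : n * Real.sqrt (m / (N * n)) = Real.sqrt (n * m / N) := by
    rw [show m / (N * n) = (n * m / N) / n ^ 2 by
          field_simp [hn.ne', hN.ne'],
        Real.sqrt_div (by positivity), Real.sqrt_sq hn.le]
    field_simp
  have h2 : m * Real.sqrt (n / (N * m)) = Real.sqrt (n * m / N) := by
    rw [show n / (N * m) = (n * m / N) / m ^ 2 by
          field_simp [hm.ne', hN.ne'],
        Real.sqrt_div (by positivity), Real.sqrt_sq hm.le]
    field_simp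
  rw [h1, h2]

private lemma cusum_piece {V : Type*} [AddCommGroup V] [Module ℝ V]
    (a b : ℕ) (c : ℝ) (v : V) (f : ℕ → V) (hab : a ≤ b)
    (h : ∀ u ∈ Finset.Ioc a b, f u = c • v) :
    ∑ u ∈ Finset.Ioc a b, f u = (((b : ℝ) - a) * c) • v := by
  rw [Finset.sum_congr rfl h, Finset.sum_const, Nat.card_Ioc,
      ← Nat.cast_smul_eq_nsmul ℝ, smul_smul]
  congr 1
  push_cast [Nat.cast_sub hab]
  ring

private lemma cusum_left {E : Type*} [NormedAddCommGroup E] [InnerProductSpace ℝ E]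
    (s η e : ℕ) (hsη : s < η) (hηe : η < e)
    (p : ℕ → E) (P₁ P₂ : E)
    (h1 : ∀ t, s < t → t ≤ η → p t = P₁)
    (h2 : ∀ t, η < t → t ≤ e → p t = P₂)
    (t : ℕ) (hst : s < t) (htη : t ≤ η) :
    cusum p s e t
      = (((e : ℝ) - η) * Real.sqrt (((t : ℝ) - s) / (((e : ℝ) - s) * ((e : ℝ) - t)))) • (P₁ - P₂) := by
  have hte : t < e := lt_of_le_of_lt htη hηe
  set a : ℝ := Real.sqrt (((e : ℝ) - t) / (((e : ℝ) - s) * ((t : ℝ) - s))) with ha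
  set b : ℝ := Real.sqrt (((t : ℝ) - s) / (((e : ℝ) - s) * ((e : ℝ) - t))) with hb
  have e1 : ∑ u ∈ Finset.Ioc s t, cusumW s e t u • p u = (((t : ℝ) - s) * a) • P₁ := by
    refine cusum_piece _ _ _ _ _ hst.le ?_
    intro u hu
    rw [Finset.mem_Ioc] at hu
    rw [cusumW, if_pos hu.2, h1 u hu.1 (hu.2.trans htη)]
  have e2 : ∑ u ∈ Finset.Ioc t η, cusumW s e t u • p u = (((η : ℝ) - t) * (-b)) • P₁ := by
    refine cusum_piece _ _ _ _ _ htη ?_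
    intro u hu
    rw [Finset.mem_Ioc] at hu
    rw [cusumW, if_neg (by omega), h1 u (hst.trans hu.1) hu.2, neg_smul, ← neg_smul]
  have e3 : ∑ u ∈ Finset.Ioc η e, cusumW s e t u • p u = (((e : ℝ) - η) * (-b)) • P₂ := by
    refine cusum_piece _ _ _ _ _ hηe.le ?_
    intro u hu
    rw [Finset.mem_Ioc] at hu
    rw [cusumW, if_neg (by omega), h2 u hu.1 hu.2, neg_smul, ← neg_smul]
  have hsum : cusum p s e t
      = (((t : ℝ) - s) * a) • P₁ + (((η : ℝ) - t) * (-b)) • P₁ + (((e : ℝ) - η) * (-b)) • P₂ := by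
    rw [cusum, ← Finset.sum_Ioc_consecutive _ (hst.le.trans htη) hηe.le,
        ← Finset.sum_Ioc_consecutive _ hst.le htη, e1, e2, e3]
  have hn : (0:ℝ) < (t : ℝ) - s := by
    have : (s:ℝ) < t := by exact_mod_cast hst
    linarith
  have hm : (0:ℝ) < (e : ℝ) - t := by
    have : (t:ℝ) < e := by exact_mod_cast hte
    linarith
  have hN : (0:ℝ) < (e : ℝ) - s := by linarith
  have key : ((t : ℝ) - s) * a = ((e : ℝ) - t) * b := by
    rw [ha, hb]
    exact key_id ((t:ℝ) - s) ((e:ℝ) - t) ((e:ℝ) - s) hn hm hN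
  have cP1 : ((t : ℝ) - s) * a + ((η : ℝ) - t) * (-b) = ((e : ℝ) - η) * b := by
    rw [key]; ring
  rw [hsum, smul_sub, ← add_smul, cP1,
      show ((e:ℝ) - η) * (-b) = -(((e:ℝ) - η) * b) by ring, neg_smul, ← sub_eq_add_neg]

private lemma cusum_right {E : Type*} [NormedAddCommGroup E] [InnerProductSpace ℝ E]
    (s η e : ℕ) (hsη : s < η) (hηe : η < e)
    (p : ℕ → E) (P₁ P₂ : E)
    (h1 : ∀ t, s < t → t ≤ η → p t = P₁)
    (h2 : ∀ t, η < t → t ≤ e → p t = P₂)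
    (t : ℕ) (hηt : η ≤ t) (hte : t < e) :
    cusum p s e t
      = (((η : ℝ) - s) * Real.sqrt (((e : ℝ) - t) / (((e : ℝ) - s) * ((t : ℝ) - s)))) • (P₁ - P₂) := by
  have hst : s < t := lt_of_lt_of_le hsη hηt
  set a : ℝ := Real.sqrt (((e : ℝ) - t) / (((e : ℝ) - s) * ((t : ℝ) - s))) with ha
  set b : ℝ := Real.sqrt (((t : ℝ) - s) / (((e : ℝ) - s) * ((e : ℝ) - t))) with hb
  have e1 : ∑ u ∈ Finset.Ioc s η, cusumW s e t u • p u = (((η : ℝ) - s) * a) • P₁ := by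
    refine cusum_piece _ _ _ _ _ hsη.le ?_
    intro u hu
    rw [Finset.mem_Ioc] at hu
    rw [cusumW, if_pos (hu.2.trans hηt), h1 u hu.1 hu.2]
  have e2 : ∑ u ∈ Finset.Ioc η t, cusumW s e t u • p u = (((t : ℝ) - η) * a) • P₂ := by
    refine cusum_piece _ _ _ _ _ hηt ?_
    intro u hu
    rw [Finset.mem_Ioc] at hu
    rw [cusumW, if_pos hu.2, h2 u hu.1 (hu.2.trans hte.le)]
  have e3 : ∑ u ∈ Finset.Ioc t e, cusumW s e t u • p u = (((e : ℝ) - t) * (-b)) • P₂ := by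
    refine cusum_piece _ _ _ _ _ hte.le ?_
    intro u hu
    rw [Finset.mem_Ioc] at hu
    rw [cusumW, if_neg (by omega), h2 u (lt_of_le_of_lt hηt hu.1) hu.2, neg_smul, ← neg_smul]
  have hsum : cusum p s e t
      = (((η : ℝ) - s) * a) • P₁ + (((t : ℝ) - η) * a) • P₂ + (((e : ℝ) - t) * (-b)) • P₂ := by
    rw [cusum, ← Finset.sum_Ioc_consecutive _ hst.le hte.le,
        ← Finset.sum_Ioc_consecutive _ hsη.le hηt, e1, e2, e3]
  have hn : (0:ℝ) < (t : ℝ) - s := by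
    have : (s:ℝ) < t := by exact_mod_cast hst
    linarith
  have hm : (0:ℝ) < (e : ℝ) - t := by
    have : (t:ℝ) < e := by exact_mod_cast hte
    linarith
  have hN : (0:ℝ) < (e : ℝ) - s := by linarith
  have key : ((t : ℝ) - s) * a = ((e : ℝ) - t) * b := by
    rw [ha, hb]
    exact key_id ((t:ℝ) - s) ((e:ℝ) - t) ((e:ℝ) - s) hn hm hN
  have cP2 : ((t : ℝ) - η) * a + ((e : ℝ) - t) * (-b) = -(((η : ℝ) - s) * a) := by
    linear_combination key
  have hP2 : (((t:ℝ) - η) * a) • P₂ + (((e:ℝ) - t) * (-b)) • P₂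
      = (-(((η:ℝ) - s) * a)) • P₂ := by rw [← add_smul, cP2]
  rw [hsum, smul_sub, add_assoc, hP2, neg_smul, ← sub_eq_add_neg]

/-- **Lemma (the population CUSUM norm is maximized at the change point).**
For a sequence in a real inner product space equal to `P₁` on `(s, η]` and `P₂`
on `(η, e]`, the map `t ↦ ‖p̃^{s,e}(t)‖²` is nondecreasing on `(s, η]` and
nonincreasing on `[η, e)`; in particular `‖p̃^{s,e}(t)‖ ≤ ‖p̃^{s,e}(η)‖` for all
`s < t < e`. -/
theorem cusum_maximized_at_change_point
    {E : Type*} [NormedAddCommGroup E] [InnerProductSpace ℝ E]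
    (T s η e : ℕ) (hsη : s < η) (hηe : η < e) (heT : e ≤ T)
    (p : ℕ → E) (P₁ P₂ : E)
    (h1 : ∀ t, s < t → t ≤ η → p t = P₁)
    (h2 : ∀ t, η < t → t ≤ e → p t = P₂) :
    (∀ t₁ t₂, s < t₁ → t₁ ≤ t₂ → t₂ ≤ η →
      ‖cusum p s e t₁‖ ^ 2 ≤ ‖cusum p s e t₂‖ ^ 2) ∧
    (∀ t₁ t₂, η ≤ t₁ → t₁ ≤ t₂ → t₂ < e →
      ‖cusum p s e t₂‖ ^ 2 ≤ ‖cusum p s e t₁‖ ^ 2) ∧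
    (∀ t, s < t → t < e → ‖cusum p s e t‖ ≤ ‖cusum p s e η‖) := by
  have hv : (0:ℝ) ≤ ‖P₁ - P₂‖ := norm_nonneg _
  have hηe' : (η:ℝ) < e := by exact_mod_cast hηe
  have hsη' : (s:ℝ) < η := by exact_mod_cast hsη
  have A : ∀ t₁ t₂, s < t₁ → t₁ ≤ t₂ → t₂ ≤ η →
      ‖cusum p s e t₁‖ ^ 2 ≤ ‖cusum p s e t₂‖ ^ 2 := by
    intro t₁ t₂ ha hab hb
    rw [cusum_left s η e hsη hηe p P₁ P₂ h1 h2 t₁ ha (hab.trans hb),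
        cusum_left s η e hsη hηe p P₁ P₂ h1 h2 t₂ (ha.trans_le hab) hb,
        norm_smul, norm_smul]
    have h1' : (s:ℝ) < t₁ := by exact_mod_cast ha
    have h2' : (t₁:ℝ) ≤ t₂ := by exact_mod_cast hab
    have h3' : (t₂:ℝ) ≤ η := by exact_mod_cast hb
    have hc : ((t₁:ℝ) - s) / (((e:ℝ) - s) * ((e:ℝ) - t₁))
        ≤ ((t₂:ℝ) - s) / (((e:ℝ) - s) * ((e:ℝ) - t₂)) := by
      apply div_le_div₀ (by linarith) (by linarith)
      · apply mul_pos <;> linarith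
      · apply mul_le_mul_of_nonneg_left (by linarith) (by linarith)
    have hcle : ((e:ℝ) - η) * Real.sqrt (((t₁:ℝ) - s) / (((e:ℝ) - s) * ((e:ℝ) - t₁)))
        ≤ ((e:ℝ) - η) * Real.sqrt (((t₂:ℝ) - s) / (((e:ℝ) - s) * ((e:ℝ) - t₂))) :=
      mul_le_mul_of_nonneg_left (Real.sqrt_le_sqrt hc) (by linarith)
    have hc₁ : (0:ℝ) ≤ ((e:ℝ) - η) * Real.sqrt (((t₁:ℝ) - s) / (((e:ℝ) - s) * ((e:ℝ) - t₁))) :=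
      mul_nonneg (by linarith) (Real.sqrt_nonneg _)
    rw [Real.norm_eq_abs, Real.norm_eq_abs, abs_of_nonneg hc₁, abs_of_nonneg (hc₁.trans hcle)]
    exact pow_le_pow_left₀ (mul_nonneg hc₁ hv) (mul_le_mul_of_nonneg_right hcle hv) 2
  have B : ∀ t₁ t₂, η ≤ t₁ → t₁ ≤ t₂ → t₂ < e →
      ‖cusum p s e t₂‖ ^ 2 ≤ ‖cusum p s e t₁‖ ^ 2 := by
    intro t₁ t₂ ha hab hb
    rw [cusum_right s η e hsη hηe p P₁ P₂ h1 h2 t₁ ha ((lt_of_le_of_lt hab hb)),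
        cusum_right s η e hsη hηe p P₁ P₂ h1 h2 t₂ (ha.trans hab) hb,
        norm_smul, norm_smul]
    have h1' : (η:ℝ) ≤ t₁ := by exact_mod_cast ha
    have h2' : (t₁:ℝ) ≤ t₂ := by exact_mod_cast hab
    have h3' : (t₂:ℝ) < e := by exact_mod_cast hb
    have hc : ((e:ℝ) - t₂) / (((e:ℝ) - s) * ((t₂:ℝ) - s))
        ≤ ((e:ℝ) - t₁) / (((e:ℝ) - s) * ((t₁:ℝ) - s)) := by
      apply div_le_div₀ (by linarith) (by linarith)
      · apply mul_pos <;> linarith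
      · apply mul_le_mul_of_nonneg_left (by linarith) (by linarith)
    have hcle : ((η:ℝ) - s) * Real.sqrt (((e:ℝ) - t₂) / (((e:ℝ) - s) * ((t₂:ℝ) - s)))
        ≤ ((η:ℝ) - s) * Real.sqrt (((e:ℝ) - t₁) / (((e:ℝ) - s) * ((t₁:ℝ) - s))) :=
      mul_le_mul_of_nonneg_left (Real.sqrt_le_sqrt hc) (by linarith)
    have hc₂ : (0:ℝ) ≤ ((η:ℝ) - s) * Real.sqrt (((e:ℝ) - t₂) / (((e:ℝ) - s) * ((t₂:ℝ) - s))) :=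
      mul_nonneg (by linarith) (Real.sqrt_nonneg _)
    rw [Real.norm_eq_abs, Real.norm_eq_abs, abs_of_nonneg hc₂, abs_of_nonneg (hc₂.trans hcle)]
    exact pow_le_pow_left₀ (mul_nonneg hc₂ hv) (mul_le_mul_of_nonneg_right hcle hv) 2
  refine ⟨A, B, ?_⟩
  intro t hst hte
  rcases le_or_gt t η with h | h
  · have := A t η hst h le_rfl
    nlinarith [norm_nonneg (cusum p s e t), norm_nonneg (cusum p s e η)]
  · have := B η t le_rfl h.le hte
    nlinarith [norm_nonneg (cusum p s e t), norm_nonneg (cusum p s e η)]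
end
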